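/- Let R be an F-finite F-pure ring of prime characteristic p and J ⊆ R an ideal. Then the Cartier core 𝒫(J) = ⋂_{s ∈ ℕ} J_s is a radical ideal. -/

import Mathlib

open Filter

section Defs
variable (p : ℕ) {R : Type*} [CommRing R]

/-- A `p^{-e}`-linear (Cartier) operator on `R`: under the identification of `R^{1/p^e}`
with `R` (sending `f^{1/p^e}` to `f`), these are exactly the `R`-linear maps
`R^{1/p^e} → R`. -/
def IsCartier (e : ℕ) (φ : R →+ R) : Prop :=
  ∀ a x : R, φ (a ^ p ^ e * x) = a * φ x

/-- `R` is `F`-pure: the inclusion `R ⊆ R^{1/p^e}` splits as a map of `R`-modules,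
equivalently there is a Cartier operator sending `1` to `1`. -/
def FPure (R : Type*) [CommRing R] : Prop :=
  ∀ e : ℕ, ∃ φ : R →+ R, IsCartier p e φ ∧ φ 1 = 1

/-- `R` is `F`-finite: `R^{1/p^e}` is a finitely generated `R`-module, i.e. `R` is a
finitely generated module over its subring of `p^e`-th powers. -/
def FFinite (R : Type*) [CommRing R] : Prop :=
  ∀ e : ℕ, ∃ s : Finset R, ∀ x : R, ∃ c : R → R, x = ∑ y ∈ s, c y ^ p ^ e * y

/-- The Frobenius power `J^{[q]}`, generated by the `q`-th powers of elements of `J`. -/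
def frobeniusPower (J : Ideal R) (q : ℕ) : Ideal R :=
  Ideal.span ((fun f => f ^ q) '' (J : Set R))

/-- The Cartier contraction `J_e = { f | φ(f^{1/p^e}) ∈ J for all φ ∈ Hom_R(R^{1/p^e}, R) }`. -/
def cartierContraction (e : ℕ) (J : Ideal R) : Ideal R where
  carrier := { f | ∀ φ : R →+ R, IsCartier p e φ → φ f ∈ J }
  add_mem' := fun ha hb φ hφ => by
    rw [map_add]; exact J.add_mem (ha φ hφ) (hb φ hφ)
  zero_mem' := fun φ hφ => by rw [map_zero]; exact J.zero_mem
  smul_mem' := by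
    intro c f hf φ hφ
    have h : IsCartier p e (φ.comp (AddMonoidHom.mulLeft c)) := by
      intro a x
      simp only [AddMonoidHom.coe_comp, Function.comp_apply, AddMonoidHom.coe_mulLeft]
      rw [mul_left_comm]
      exact hφ a (c * x)
    simpa using hf _ h

/-- The Cartier core `𝒫(J) = ⋂ₛ Jₛ`. -/
def cartierCore (J : Ideal R) : Ideal R := ⨅ s : ℕ, cartierContraction p s J

/-- `J` is uniformly `F`-compatible: `φ(J^{1/p^e}) ⊆ J` for all `e > 0` and all
`φ ∈ Hom_R(R^{1/p^e}, R)`. -/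
def UniformlyFCompatible (J : Ideal R) : Prop :=
  ∀ e : ℕ, 0 < e → ∀ φ : R →+ R, IsCartier p e φ → ∀ f ∈ J, φ f ∈ J

/-- `ν_𝔞^J(q) = max { m | 𝔞^m ⊄ J^{[q]} }`. -/
noncomputable def nuNum (𝔞 J : Ideal R) (q : ℕ) : ℕ :=
  sSup { m : ℕ | ¬ 𝔞 ^ m ≤ frobeniusPower J q }

/-- `b_𝔞^J(p^e) = max { t | 𝔞^t ⊄ J_e }`. -/
noncomputable def bNum (𝔞 J : Ideal R) (e : ℕ) : ℕ :=
  sSup { t : ℕ | ¬ 𝔞 ^ t ≤ cartierContraction p e J }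

/-- `μ(𝔞)`, the minimal number of generators of `𝔞`. -/
noncomputable def muGen (𝔞 : Ideal R) : ℕ :=
  sInf { k : ℕ | ∃ s : Finset R, s.card = k ∧ Ideal.span (s : Set R) = 𝔞 }

end Defs

/-- The Cartier core `𝒫(J) = ⋂ₛ Jₛ` is a radical ideal. -/
theorem cartierCore_isRadical {R : Type*} [CommRing R]
    (p : ℕ) (hp : p.Prime) [CharP R p] (hFF : FFinite p R) (hFP : FPure p R)
    (J : Ideal R) :
    (cartierCore p J).IsRadical := by
  intro x hx
  obtain ⟨n, hn⟩ := hx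
  have hmem : ∀ s : ℕ, x ^ n ∈ cartierContraction p s J :=
    fun s => Ideal.mem_iInf.mp hn s
  rw [cartierCore, Ideal.mem_iInf]
  intro s φ hφ
  obtain ⟨ψ, hψ, hψ1⟩ := hFP n
  have hk : n ≤ p ^ n :=
    le_trans (Nat.le_of_lt (Nat.lt_two_pow_self (n := n))) (Nat.pow_le_pow_left hp.two_le n)
  have hxp : x ^ p ^ n ∈ cartierContraction p (s + n) J := by
    have h : x ^ p ^ n = x ^ (p ^ n - n) * x ^ n := by
      rw [← pow_add, Nat.sub_add_cancel hk]
    rw [h]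
    exact Ideal.mul_mem_left _ _ (hmem (s + n))
  have hcomp : IsCartier p (s + n) (φ.comp ψ) := by
    intro a y
    have h : a ^ p ^ (s + n) * y = (a ^ p ^ s) ^ p ^ n * y := by
      rw [← pow_mul, ← pow_add]
    simp only [AddMonoidHom.coe_comp, Function.comp_apply]
    rw [h, hψ, hφ]
  have hfx : φ x = (φ.comp ψ) (x ^ p ^ n) := by
    have h : ψ (x ^ p ^ n) = x := by
      have := hψ x 1
      rw [mul_one, hψ1, mul_one] at this
      exact this
    simp [h]
  rw [hfx]
  exact hxp _ hcomp
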